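/- Let F : ℂ × ℂ → ℂ be an entire caloric function, let f(z) := F(0, z) be its initial condition, and let c_k := f^{(k)}(0)/k! be the Taylor coefficients of f at 0. Then the order ρ := limsup_{n→∞} (n ln n)/(−ln|c_n|) of f satisfies ρ ≤ 2, and moreover limsup_{n→∞} n·|c_n|^{2/n} = 0; in particular, in the extreme case ρ = 2 the type of f (with respect to order 2) is zero, i.e. f is of minimal type. -/

import Mathlib

open Filter MeasureTheory

open Set
open scoped ENNReal NNReal Topology

namespace CaloricAux

noncomputable def Qd (G : ℂ × ℂ → ℂ) : ℂ × ℂ → ℂ := fun x => fderiv ℂ G x (0, 1)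
noncomputable def Pd (G : ℂ × ℂ → ℂ) : ℂ × ℂ → ℂ := fun x => fderiv ℂ G x (1, 0)

variable {G : ℂ × ℂ → ℂ}

lemma anal_apply (hG : AnalyticOnNhd ℂ G univ) (v : ℂ × ℂ) :
    AnalyticOnNhd ℂ (fun x => fderiv ℂ G x v) univ := by
  have h1 : AnalyticOnNhd ℂ (fderiv ℂ G) univ := hG.fderiv
  have h2 : AnalyticOnNhd ℂ (fun L : (ℂ × ℂ) →L[ℂ] ℂ => L v) univ :=
    (ContinuousLinearMap.apply ℂ ℂ v).analyticOnNhd univ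
  exact h2.comp h1 (mapsTo_univ _ _)

lemma Qd_analytic (hG : AnalyticOnNhd ℂ G univ) : AnalyticOnNhd ℂ (Qd G) univ :=
  anal_apply hG _

lemma Pd_analytic (hG : AnalyticOnNhd ℂ G univ) : AnalyticOnNhd ℂ (Pd G) univ :=
  anal_apply hG _

lemma Qd_iter_analytic (hG : AnalyticOnNhd ℂ G univ) (k : ℕ) :
    AnalyticOnNhd ℂ (Qd^[k] G) univ := by
  induction k with
  | zero => exact hG
  | succ k ih => rw [Function.iterate_succ_apply']; exact Qd_analytic ih

lemma Pd_iter_analytic (hG : AnalyticOnNhd ℂ G univ) (k : ℕ) :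
    AnalyticOnNhd ℂ (Pd^[k] G) univ := by
  induction k with
  | zero => exact hG
  | succ k ih => rw [Function.iterate_succ_apply']; exact Pd_analytic ih

lemma hasDerivAt_snd {t z : ℂ} (hG : DifferentiableAt ℂ G (t, z)) :
    HasDerivAt (fun w => G (t, w)) (Qd G (t, z)) z := by
  have h1 : HasFDerivAt (fun w : ℂ => ((t, w) : ℂ × ℂ))
      ((0 : ℂ →L[ℂ] ℂ).prod (ContinuousLinearMap.id ℂ ℂ)) z :=
    HasFDerivAt.prodMk (hasFDerivAt_const t z) (hasFDerivAt_id z)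
  have h2 := (hG.hasFDerivAt.comp z h1).hasDerivAt
  simpa [Qd, Function.comp_def] using h2

lemma hasDerivAt_fst {t z : ℂ} (hG : DifferentiableAt ℂ G (t, z)) :
    HasDerivAt (fun s => G (s, z)) (Pd G (t, z)) t := by
  have h1 : HasFDerivAt (fun s : ℂ => ((s, z) : ℂ × ℂ))
      ((ContinuousLinearMap.id ℂ ℂ).prod (0 : ℂ →L[ℂ] ℂ)) t :=
    HasFDerivAt.prodMk (hasFDerivAt_id t) (hasFDerivAt_const z t)
  have h2 := (hG.hasFDerivAt.comp t h1).hasDerivAt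
  simpa [Pd, Function.comp_def] using h2

lemma clairaut (hG : AnalyticOnNhd ℂ G univ) : Pd (Qd G) = Qd (Pd G) := by
  funext x
  have hdx : DifferentiableAt ℂ (fderiv ℂ G) x := ((hG.fderiv) x trivial).differentiableAt
  have hsym : IsSymmSndFDerivAt ℂ G x :=
    (hG x trivial).contDiffAt.isSymmSndFDerivAt (n := 2) (by simp)
  have e1 : ∀ v w : ℂ × ℂ, fderiv ℂ (fun y => fderiv ℂ G y v) x w
      = fderiv ℂ (fderiv ℂ G) x w v := by
    intro v w
    rw [fderiv_clm_apply hdx (differentiableAt_const v)]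
    simp
  show fderiv ℂ (fun y => fderiv ℂ G y (0, 1)) x (1, 0)
      = fderiv ℂ (fun y => fderiv ℂ G y (1, 0)) x (0, 1)
  rw [e1, e1, hsym.eq]


lemma iteratedDeriv_snd (hG : AnalyticOnNhd ℂ G univ) (k : ℕ) (t z : ℂ) :
    iteratedDeriv k (fun w => G (t, w)) z = Qd^[k] G (t, z) := by
  induction k generalizing z with
  | zero => simp
  | succ k ih =>
    rw [iteratedDeriv_succ]
    have hfun : iteratedDeriv k (fun w => G (t, w)) = fun w => Qd^[k] G (t, w) :=
      funext fun w => ih w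
    rw [hfun, Function.iterate_succ_apply']
    exact (hasDerivAt_snd ((Qd_iter_analytic hG k) (t, z) trivial).differentiableAt).deriv

lemma iteratedDeriv_fst (hG : AnalyticOnNhd ℂ G univ) (k : ℕ) (t z : ℂ) :
    iteratedDeriv k (fun s => G (s, z)) t = Pd^[k] G (t, z) := by
  induction k generalizing t with
  | zero => simp
  | succ k ih =>
    rw [iteratedDeriv_succ]
    have hfun : iteratedDeriv k (fun s => G (s, z)) = fun s => Pd^[k] G (s, z) :=
      funext fun s => ih s
    rw [hfun, Function.iterate_succ_apply']
    exact (hasDerivAt_fst ((Pd_iter_analytic hG k) (t, z) trivial).differentiableAt).deriv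

lemma clairaut_iter (hG : AnalyticOnNhd ℂ G univ) (j : ℕ) :
    Pd (Qd^[j] G) = Qd^[j] (Pd G) := by
  induction j generalizing G with
  | zero => rfl
  | succ j ih =>
    rw [Function.iterate_succ_apply, Function.iterate_succ_apply]
    rw [ih (Qd_analytic hG), clairaut hG]

lemma heat_iter : ∀ (m : ℕ) (G : ℂ × ℂ → ℂ), AnalyticOnNhd ℂ G univ →
    Pd G = Qd^[2] G → Pd^[m] G = Qd^[2 * m] G := by
  intro m
  induction m with
  | zero => intro G _ _; rfl
  | succ m ih =>
    intro G hG hH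
    have hG2 : AnalyticOnNhd ℂ (Qd^[2] G) univ := Qd_iter_analytic hG 2
    have hH2 : Pd (Qd^[2] G) = Qd^[2] (Qd^[2] G) := by
      rw [clairaut_iter hG 2, hH]
    calc Pd^[m + 1] G = Pd^[m] (Pd G) := Function.iterate_succ_apply Pd m G
      _ = Pd^[m] (Qd^[2] G) := by rw [hH]
      _ = Qd^[2 * m] (Qd^[2] G) := ih _ hG2 hH2
      _ = Qd^[2 * m + 2] G := (Function.iterate_add_apply Qd (2 * m) 2 G).symm
      _ = Qd^[2 * (m + 1)] G := by ring_nf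


lemma cauchy_coeff_bound {g : ℂ → ℂ} (hg : Differentiable ℂ g) (r : NNReal) :
    ∃ C : ℝ, 1 ≤ C ∧ ∀ m : ℕ,
      ‖iteratedDeriv m g 0‖ * (r : ℝ) ^ m ≤ C * m.factorial := by
  have hRpos : (0 : ℝ≥0) < r + 1 := lt_of_lt_of_le zero_lt_one le_add_self
  have hdo : DifferentiableOn ℂ g (Metric.closedBall (0 : ℂ) (r + 1 : ℝ≥0)) :=
    hg.differentiableOn
  have hball := hdo.hasFPowerSeriesOnBall hRpos
  set p := cauchyPowerSeries g 0 (r + 1 : ℝ≥0) with hp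
  have hr : (r : ℝ≥0∞) < p.radius := by
    refine lt_of_lt_of_le ?_ hball.r_le
    exact_mod_cast lt_add_one (r : ℝ≥0)
  obtain ⟨C, hC0, hC⟩ := p.norm_mul_pow_le_of_lt_radius hr
  refine ⟨max C 1, le_max_right _ _, fun m => ?_⟩
  have h1 : iteratedDeriv m g 0 = iteratedFDeriv ℂ m g 0 (fun _ => (1 : ℂ)) :=
    iteratedDeriv_eq_iteratedFDeriv
  have h2 : (m.factorial : ℕ) • p m (fun _ => (1 : ℂ)) =
      iteratedFDeriv ℂ m g 0 (fun _ => (1 : ℂ)) := hball.factorial_smul (1 : ℂ) m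
  have h3 : ‖iteratedDeriv m g 0‖ = (m.factorial : ℝ) * ‖p m (fun _ => (1 : ℂ))‖ := by
    rw [h1, ← h2]
    simp [norm_smul]
  have h4 : ‖p m (fun _ => (1 : ℂ))‖ ≤ ‖p m‖ := by
    have := (p m).le_opNorm (fun _ => (1 : ℂ))
    simpa using this
  calc ‖iteratedDeriv m g 0‖ * (r : ℝ) ^ m
      = (m.factorial : ℝ) * (‖p m (fun _ => (1 : ℂ))‖ * (r : ℝ) ^ m) := by rw [h3]; ring
    _ ≤ (m.factorial : ℝ) * (‖p m‖ * (r : ℝ) ^ m) := by gcongr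
    _ ≤ (m.factorial : ℝ) * C := by
        have := hC m
        gcongr
    _ ≤ max C 1 * m.factorial := by
        rw [mul_comm]
        gcongr
        exact le_max_left _ _


lemma key_ident {F : ℂ × ℂ → ℂ} (hFa : AnalyticOnNhd ℂ F univ)
    (hPQ : Pd F = Qd^[2] F) (m j : ℕ) :
    iteratedDeriv (2 * m + j) (fun z => F (0, z)) 0
      = iteratedDeriv m (fun t => Qd^[j] F (t, 0)) 0 := by
  have hQj : AnalyticOnNhd ℂ (Qd^[j] F) univ := Qd_iter_analytic hFa j
  have hheat : Pd (Qd^[j] F) = Qd^[2] (Qd^[j] F) := by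
    rw [clairaut_iter hFa j, hPQ, ← Function.iterate_add_apply, ← Function.iterate_add_apply,
      Nat.add_comm]
  rw [iteratedDeriv_snd hFa (2 * m + j) 0 0, Function.iterate_add_apply,
    ← heat_iter m _ hQj hheat, iteratedDeriv_fst hQj m 0 0]

lemma master {F : ℂ × ℂ → ℂ} (hFa : AnalyticOnNhd ℂ F univ)
    (hPQ : Pd F = Qd^[2] F) (c : ℕ → ℂ)
    (hc : ∀ k : ℕ, c k = iteratedDeriv k (fun z => F (0, z)) 0 / (k.factorial : ℂ))
    (r : NNReal) :
    ∃ C : ℝ, 1 ≤ C ∧ ∀ n : ℕ,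
      ‖c n‖ * (((n / 2 : ℕ) : ℝ) * r) ^ (n / 2) ≤ C := by
  have hdif : ∀ j : ℕ, Differentiable ℂ (fun t => Qd^[j] F (t, 0)) := by
    intro j t
    exact ((Qd_iter_analytic hFa j) (t, 0) trivial).differentiableAt.comp t
      (differentiableAt_id.prodMk (differentiableAt_const 0))
  obtain ⟨C0, hC01, hC0⟩ := cauchy_coeff_bound (hdif 0) r
  obtain ⟨C1, hC11, hC1⟩ := cauchy_coeff_bound (hdif 1) r
  refine ⟨max C0 C1, le_trans hC01 (le_max_left _ _), fun n => ?_⟩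
  set m := n / 2 with hm
  set j := n % 2 with hj
  have hmj : 2 * m + j = n := Nat.div_add_mod n 2
  have hid : iteratedDeriv n (fun z => F (0, z)) 0
      = iteratedDeriv m (fun t => Qd^[j] F (t, 0)) 0 := by
    rw [← hmj]; exact key_ident hFa hPQ m j
  have hbound : ‖iteratedDeriv m (fun t => Qd^[j] F (t, 0)) 0‖ * (r : ℝ) ^ m
      ≤ max C0 C1 * m.factorial := by
    rcases Nat.mod_two_eq_zero_or_one n with h | h
    · rw [hj, h]
      exact le_trans (hC0 m) (by gcongr; exact le_max_left _ _)
    · rw [hj, h]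
      exact le_trans (hC1 m) (by gcongr; exact le_max_right _ _)
  have hfact : (m.factorial : ℝ) * (m : ℝ) ^ m ≤ (n.factorial : ℝ) := by
    have h1 : m.factorial * m ^ m ≤ m.factorial * (m + 1) ^ m := by gcongr <;> omega
    have h2 : m.factorial * (m + 1) ^ m ≤ (m + m).factorial :=
      Nat.factorial_mul_pow_le_factorial
    have h3 : (m + m).factorial ≤ n.factorial := Nat.factorial_le (by omega)
    exact_mod_cast le_trans h1 (le_trans h2 h3)
  have habs : ‖c n‖
      = ‖iteratedDeriv m (fun t => Qd^[j] F (t, 0)) 0‖ / n.factorial := by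
    rw [hc n, norm_div, hid]
    norm_num [Complex.norm_natCast]
  have hnf : (0 : ℝ) < n.factorial := by positivity
  calc ‖c n‖ * (((m : ℕ) : ℝ) * r) ^ m
      = (‖iteratedDeriv m (fun t => Qd^[j] F (t, 0)) 0‖ * (r : ℝ) ^ m)
          * (m : ℝ) ^ m / n.factorial := by rw [habs, mul_pow]; ring
    _ ≤ (max C0 C1 * m.factorial) * (m : ℝ) ^ m / n.factorial := by gcongr
    _ = max C0 C1 * ((m.factorial : ℝ) * (m : ℝ) ^ m) / n.factorial := by ring
    _ ≤ max C0 C1 * (n.factorial : ℝ) / n.factorial := by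
        have hC : (0:ℝ) ≤ max C0 C1 := le_trans zero_le_one (le_trans hC01 (le_max_left _ _))
        gcongr
    _ = max C0 C1 := by field_simp


lemma endgame_key (c : ℕ → ℂ)
    (hmaster : ∀ r : NNReal, ∃ C : ℝ, 1 ≤ C ∧ ∀ n : ℕ,
      ‖c n‖ * (((n / 2 : ℕ) : ℝ) * r) ^ (n / 2) ≤ C)
    {ε : ℝ} (hε : 0 < ε) (hε1 : ε ≤ 1) :
    ∀ᶠ n : ℕ in atTop, (n : ℝ) * ‖c n‖ ^ (2 / (n : ℝ)) ≤ ε := by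
  set r : NNReal := Real.toNNReal (18 / ε ^ 2) with hrdef
  have hr : (r : ℝ) = 18 / ε ^ 2 := Real.coe_toNNReal _ (by positivity)
  have hrpos : (0 : ℝ) < r := by rw [hr]; positivity
  obtain ⟨C, hC1, hC⟩ := hmaster r
  have hCpos : (0 : ℝ) < C := lt_of_lt_of_le zero_lt_one hC1
  set K : ℝ := 3 * C / ε with hKdef
  have ev1 : ∀ᶠ m : ℕ in atTop, K * (m : ℝ) ≤ 6 ^ m := by
    filter_upwards [(tendsto_pow_atTop_atTop_of_one_lt
      (by norm_num : (1 : ℝ) < 3)).eventually_ge_atTop K] with m hm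
    calc K * (m : ℝ) ≤ (3 : ℝ) ^ m * (m : ℝ) :=
          mul_le_mul_of_nonneg_right hm (Nat.cast_nonneg m)
      _ ≤ (3 : ℝ) ^ m * (2 : ℝ) ^ m := by
          gcongr
          exact_mod_cast (Nat.lt_two_pow_self (n := m)).le
      _ = 6 ^ m := by rw [← mul_pow]; norm_num
  have hdiv : Tendsto (fun n : ℕ => n / 2) atTop atTop :=
    tendsto_atTop_atTop.2 fun b => ⟨2 * b, fun a ha => by omega⟩
  filter_upwards [hdiv.eventually ev1, eventually_ge_atTop 4] with n hexp hn4
  set m := n / 2 with hm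
  have hm2 : 2 ≤ m := by omega
  have hmpos : (0 : ℝ) < (m : ℝ) := by exact_mod_cast (by omega : 0 < m)
  have hn0 : (0 : ℝ) < (n : ℝ) := by exact_mod_cast (by omega : 0 < n)
  have hb : (0 : ℝ) < ((m : ℝ) * r) ^ m := pow_pos (mul_pos hmpos hrpos) m
  -- Step A
  have hA : ‖c n‖ ≤ C / ((m : ℝ) * r) ^ m := (le_div_iff₀ hb).2 (hC n)
  -- key2
  have h3Cm : 3 * C * (m : ℝ) ≤ ε * 6 ^ m := by
    calc 3 * C * (m : ℝ) = ε * (K * (m : ℝ)) := by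
          rw [hKdef]; field_simp
      _ ≤ ε * 6 ^ m := by gcongr
  have hn3m : (n : ℝ) ≤ 3 * (m : ℝ) := by exact_mod_cast (by omega : n ≤ 3 * m)
  have key2 : C * (n : ℝ) ^ (m + 1) ≤ ε ^ (m + 1) * ((m : ℝ) * r) ^ m := by
    calc C * (n : ℝ) ^ (m + 1) ≤ C * (3 * (m : ℝ)) ^ (m + 1) := by gcongr
      _ = (3 * C * (m : ℝ)) * ((3 : ℝ) ^ m * (m : ℝ) ^ m) := by
          rw [mul_pow, pow_succ, pow_succ]; ring
      _ ≤ (ε * 6 ^ m) * ((3 : ℝ) ^ m * (m : ℝ) ^ m) := by gcongr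
      _ = ε * 18 ^ m * (m : ℝ) ^ m := by
          rw [(by rw [← mul_pow]; norm_num : (18 : ℝ) ^ m = 6 ^ m * 3 ^ m)]
          ring
      _ ≤ ε * (18 / ε) ^ m * (m : ℝ) ^ m := by
          gcongr
          · exact (le_div_iff₀ hε).mpr (by nlinarith)
      _ = ε ^ (m + 1) * ((m : ℝ) * (18 / ε ^ 2)) ^ m := by
          rw [mul_pow (m:ℝ), div_pow, div_pow, pow_succ]
          field_simp
          ring
      _ = ε ^ (m + 1) * ((m : ℝ) * r) ^ m := by rw [hr]
  -- Step B
  have hB : C / ((m : ℝ) * r) ^ m ≤ (ε / n) ^ (m + 1) := by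
    have hnp : (0 : ℝ) < (n : ℝ) ^ (m + 1) := pow_pos hn0 _
    calc C / ((m : ℝ) * r) ^ m
        = C * (n : ℝ) ^ (m + 1) / (n : ℝ) ^ (m + 1) / ((m : ℝ) * r) ^ m := by
          rw [mul_div_cancel_right₀ _ (ne_of_gt hnp)]
      _ ≤ ε ^ (m + 1) * ((m : ℝ) * r) ^ m / (n : ℝ) ^ (m + 1) / ((m : ℝ) * r) ^ m := by
          gcongr
      _ = (ε / n) ^ (m + 1) := by
          rw [div_pow]
          field_simp
  -- Step C
  have h01 : (0 : ℝ) < ε / (n : ℝ) := by positivity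
  have h1 : ε / (n : ℝ) ≤ 1 := by
    rw [div_le_one hn0]
    calc ε ≤ 1 := hε1
      _ ≤ (n : ℝ) := by exact_mod_cast (by omega : 1 ≤ n)
  have hC' : (ε / n) ^ (m + 1) ≤ (ε / n) ^ ((n : ℝ) / 2) := by
    rw [← Real.rpow_natCast (ε / (n : ℝ)) (m + 1)]
    apply Real.rpow_le_rpow_of_exponent_ge h01 h1
    push_cast
    have : (n : ℝ) ≤ 2 * ((m : ℝ) + 1) := by exact_mod_cast (by omega : n ≤ 2 * (m + 1))
    linarith
  -- Step D
  have habs : ‖c n‖ ≤ (ε / n) ^ ((n : ℝ) / 2) := hA.trans (hB.trans hC')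
  have hD : ‖c n‖ ^ (2 / (n : ℝ)) ≤ ε / n := by
    have h2 : (‖c n‖) ^ (2 / (n : ℝ)) ≤ ((ε / n) ^ ((n : ℝ) / 2)) ^ (2 / (n : ℝ)) :=
      Real.rpow_le_rpow (norm_nonneg _) habs (by positivity)
    refine h2.trans_eq ?_
    rw [← Real.rpow_mul h01.le]
    rw [(by field_simp : (n : ℝ) / 2 * (2 / (n : ℝ)) = 1), Real.rpow_one]
  calc (n : ℝ) * ‖c n‖ ^ (2 / (n : ℝ)) ≤ (n : ℝ) * (ε / n) :=
        mul_le_mul_of_nonneg_left hD hn0.le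
    _ = ε := by field_simp

lemma endgame (c : ℕ → ℂ)
    (hmaster : ∀ r : NNReal, ∃ C : ℝ, 1 ≤ C ∧ ∀ n : ℕ,
      ‖c n‖ * (((n / 2 : ℕ) : ℝ) * r) ^ (n / 2) ≤ C) :
    Tendsto (fun n : ℕ => (n : ℝ) * ‖c n‖ ^ (2 / (n : ℝ))) atTop (𝓝 0) := by
  rw [Metric.tendsto_nhds]
  intro ε hε
  have hε' : 0 < min (ε / 2) 1 := by positivity
  filter_upwards [endgame_key c hmaster hε' (min_le_right _ _), eventually_ge_atTop 1]
    with n hn hn1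
  rw [Real.dist_eq, sub_zero, abs_of_nonneg (by positivity)]
  calc (n : ℝ) * ‖c n‖ ^ (2 / (n : ℝ)) ≤ min (ε / 2) 1 := hn
    _ ≤ ε / 2 := min_le_left _ _
    _ < ε := by linarith


end CaloricAux

/-- An entire caloric function: `F : ℂ × ℂ → ℂ` is analytic on all of `ℂ²` and satisfies
the heat equation `∂_t F(t,z) = ∂_z² F(t,z)` everywhere. -/
def IsEntireCaloric (F : ℂ × ℂ → ℂ) : Prop :=
  AnalyticOnNhd ℂ F Set.univ ∧
    ∀ t z : ℂ, deriv (fun s => F (s, z)) t = iteratedDeriv 2 (fun w => F (t, w)) z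

/-- If `f(z) = F(0,z)` is the initial condition of an entire caloric function,
with Taylor coefficients `c_k = f⁽ᵏ⁾(0)/k!`, then the order
`ρ = limsup n ln n / (−ln |c_n|)` of `f` satisfies `ρ ≤ 2`, and moreover
`limsup_n n |c_n|^{2/n} = 0` (so if `ρ = 2` then `f` is of minimal type). -/
theorem initialCondition_order_le_two_and_minimal_type
    (F : ℂ × ℂ → ℂ) (hF : IsEntireCaloric F)
    (c : ℕ → ℂ)
    (hc : ∀ k : ℕ, c k = iteratedDeriv k (fun z => F (0, z)) 0 / (k.factorial : ℂ)) :
    Filter.limsup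
        (fun n : ℕ =>
          (((n : ℝ) * Real.log n / (-Real.log (‖c n‖)) : ℝ) : EReal))
        Filter.atTop ≤ (2 : EReal) ∧
    Filter.limsup
        (fun n : ℕ =>
          (((n : ℝ) * ‖c n‖ ^ (2 / (n : ℝ)) : ℝ) : EReal))
        Filter.atTop = (0 : EReal) := by
  obtain ⟨hFa, hheat⟩ := hF
  have hPQ : CaloricAux.Pd F = CaloricAux.Qd^[2] F := by
    funext x
    obtain ⟨t, z⟩ := x
    have h1 : deriv (fun s => F (s, z)) t = CaloricAux.Pd F (t, z) :=
      (CaloricAux.hasDerivAt_fst ((hFa (t, z) trivial).differentiableAt)).deriv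
    rw [← h1, hheat t z, CaloricAux.iteratedDeriv_snd hFa 2 t z]
  have hmaster := fun r => CaloricAux.master hFa hPQ c hc r
  have hT := CaloricAux.endgame c hmaster
  have h2 : Filter.limsup
      (fun n : ℕ => (((n : ℝ) * ‖c n‖ ^ (2 / (n : ℝ)) : ℝ) : EReal))
      Filter.atTop = (0 : EReal) := by
    have hT' : Tendsto (fun n : ℕ => (((n : ℝ) * ‖c n‖ ^ (2 / (n : ℝ)) : ℝ) : EReal))
        atTop (𝓝 (0 : EReal)) := by
      rw [show (0 : EReal) = ((0 : ℝ) : EReal) by simp]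
      exact EReal.tendsto_coe.2 hT
    exact hT'.limsup_eq
  refine ⟨?_, h2⟩
  have hev : ∀ᶠ n : ℕ in atTop, (n : ℝ) * ‖c n‖ ^ (2 / (n : ℝ)) < 1 :=
    hT.eventually_lt_const zero_lt_one
  refine Filter.limsup_le_of_le (by isBoundedDefault) ?_
  filter_upwards [hev, eventually_ge_atTop 2] with n hlt hn2
  have key : (n : ℝ) * Real.log n / (-Real.log (‖c n‖)) ≤ 2 := by
    rcases eq_or_lt_of_le (norm_nonneg (c n)) with h0 | h0
    · rw [← h0, Real.log_zero, neg_zero, div_zero]; norm_num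
    · have hn0 : (0 : ℝ) < n := by exact_mod_cast (by omega : 0 < n)
      have ht : ‖c n‖ ^ (2 / (n : ℝ)) < 1 / n := by
        rw [lt_div_iff₀ hn0, mul_comm]
        exact hlt
      have hlog : Real.log (‖c n‖ ^ (2 / (n : ℝ)))
          = (2 / (n : ℝ)) * Real.log (‖c n‖) := Real.log_rpow h0 _
      have h2' := Real.log_lt_log (Real.rpow_pos_of_pos h0 _) ht
      rw [hlog, one_div, Real.log_inv] at h2'
      have hL : Real.log (‖c n‖) < -((n : ℝ) / 2 * Real.log n) := by
        have hmul := mul_lt_mul_of_pos_left h2' (by positivity : (0 : ℝ) < (n : ℝ) / 2)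
        have hid : (n : ℝ) / 2 * (2 / (n : ℝ) * Real.log (‖c n‖))
            = Real.log (‖c n‖) := by field_simp
        rw [hid] at hmul
        linarith
      have hlogn0 : (0 : ℝ) < Real.log n :=
        Real.log_pos (by exact_mod_cast (by omega : 1 < n))
      have hP : (0 : ℝ) < (n : ℝ) / 2 * Real.log n := mul_pos (by positivity) hlogn0
      have hD : (0 : ℝ) < -Real.log (‖c n‖) := by linarith
      rw [div_le_iff₀ hD]
      have hring : (n : ℝ) / 2 * Real.log n * 2 = (n : ℝ) * Real.log n := by ring
      linarith
  have hcoe : (((n : ℝ) * Real.log n / (-Real.log (‖c n‖)) : ℝ) : EReal)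
      ≤ ((2 : ℝ) : EReal) := EReal.coe_le_coe_iff.2 key
  have h2e : ((2 : ℝ) : EReal) = (2 : EReal) := by norm_cast
  rw [← h2e]
  exact hcoe
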